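/- arXiv:2203.10728 — 4 statements merged into one kernel-verified Lean document; each statement's English description precedes it below -/
import Mathlib

section
/- Let a, b be complex numbers with a ≠ b and a, b ∉ ℤ. Then Σ_{n=0}^∞ (−1)^n/((n+a)(n+b)) + Σ_{n=1}^∞ (−1)^n/((n−a)(n−b)) = (π/(b−a))·(1/sin(πa) − 1/sin(πb)). -/
open Complex Finset Real Filter

open scoped Topology

/-- Generalized harmonic number `H_n^{(p)}` as a complex number. -/
noncomputable def gH (p n : ℕ) : ℂ := ∑ k ∈ Finset.range n, (1 : ℂ) / ((k : ℂ) + 1) ^ p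

/-- Complex digamma function, defined via its series expansion. -/
noncomputable def digammaC (a : ℂ) : ℂ :=
  -(Real.eulerMascheroniConstant : ℂ) + ∑' n : ℕ, ((1 : ℂ) / ((n : ℂ) + 1) - 1 / ((n : ℂ) + a))

/-- Polygamma function `ψ^{(j)}` of order `j` (with `ψ^{(0)} = ψ`). -/
noncomputable def polygammaC (j : ℕ) (a : ℂ) : ℂ :=
  if j = 0 then digammaC a
  else (-1 : ℂ) ^ (j + 1) * (Nat.factorial j) * ∑' k : ℕ, (1 : ℂ) / (a + (k : ℂ)) ^ (j + 1)

/-- Hurwitz zeta value `ζ(s; a)` at integer `s ≥ 1`, with the convention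
`ζ(1; a) = -(ψ(a) + γ)`. -/
noncomputable def hzeta (s : ℕ) (a : ℂ) : ℂ :=
  if s = 1 then -(digammaC a + (Real.eulerMascheroniConstant : ℂ))
  else ∑' n : ℕ, (1 : ℂ) / ((n : ℂ) + a) ^ s

/-- Riemann zeta value at a nonnegative integer, with the conventions
`ζ(0) = -1/2` and `ζ(1) = 0`. -/
noncomputable def zval (s : ℕ) : ℂ :=
  if s = 0 then -1/2 else if s = 1 then 0 else ∑' n : ℕ, (1 : ℂ) / ((n : ℂ) + 1) ^ s

/-- Alternating Riemann zeta value `ζ̄(s) = Σ_{n≥1} (-1)^{n-1}/n^s`, with the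
convention `ζ̄(0) = 1/2`. -/
noncomputable def azval (s : ℕ) : ℂ :=
  if s = 0 then 1/2 else ∑' n : ℕ, (-1 : ℂ) ^ n / ((n : ℂ) + 1) ^ s

/-- Alternating Hurwitz zeta value `ζ̄(s; a) = Σ_{n≥0} (-1)^n/(n+a)^s`. -/
noncomputable def ahzeta (s : ℕ) (a : ℂ) : ℂ :=
  ∑' n : ℕ, (-1 : ℂ) ^ n / ((n : ℂ) + a) ^ s

/-- Alternating double zeta value `ζ(overline{2j}, 2m+1)`. -/
noncomputable def altDoubleZeta (j m : ℕ) : ℂ :=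
  ∑' n : ℕ, (-1 : ℂ) ^ (n + 1) * gH (2 * m + 1) n / ((n : ℂ) + 1) ^ (2 * j)


private lemma summable_go : Summable (fun j : ℕ => (1:ℝ)/((j:ℝ)+1)^2) := by
  have := Real.summable_one_div_nat_pow.mpr (by norm_num : 1 < 2)
  simpa using (summable_nat_add_iff 1).mpr this

private lemma norm_prod_one_add_sub_one_le (s : Finset ℕ) (v : ℕ → ℂ) :
    ‖(∏ j ∈ s, (1 + v j)) - 1‖ ≤ (∏ j ∈ s, (1 + ‖v j‖)) - 1 := by
  classical
  induction s using Finset.cons_induction with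
  | empty => simp
  | cons a s ha ih =>
    rw [Finset.prod_cons, Finset.prod_cons]
    have hQ : (1:ℝ) ≤ ∏ j ∈ s, (1 + ‖v j‖) := by
      calc (1:ℝ) = ∏ _j ∈ s, (1:ℝ) := (Finset.prod_const_one).symm
        _ ≤ ∏ j ∈ s, (1 + ‖v j‖) := Finset.prod_le_prod (by intros; norm_num)
            (fun j _ => le_add_of_nonneg_right (norm_nonneg _))
    have hP : ‖∏ j ∈ s, (1 + v j)‖ ≤ ∏ j ∈ s, (1 + ‖v j‖) := by
      rw [norm_prod]
      exact Finset.prod_le_prod (fun j _ => norm_nonneg _)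
        (fun j _ => (norm_add_le _ _).trans (by simp))
    have h1 : (1 + v a) * ∏ j ∈ s, (1 + v j) - 1
        = (∏ j ∈ s, (1 + v j) - 1) + v a * ∏ j ∈ s, (1 + v j) := by ring
    calc ‖(1 + v a) * ∏ j ∈ s, (1 + v j) - 1‖
        ≤ ‖(∏ j ∈ s, (1 + v j)) - 1‖ + ‖v a‖ * ‖∏ j ∈ s, (1 + v j)‖ := by
          rw [h1]; exact (norm_add_le _ _).trans (by rw [norm_mul])
      _ ≤ ((∏ j ∈ s, (1 + ‖v j‖)) - 1) + ‖v a‖ * ∏ j ∈ s, (1 + ‖v j‖) :=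
          add_le_add ih (mul_le_mul_of_nonneg_left hP (norm_nonneg _))
      _ = (1 + ‖v a‖) * ∏ j ∈ s, (1 + ‖v j‖) - 1 := by ring

private lemma prod_one_add_le_exp_sum (s : Finset ℕ) (w : ℕ → ℝ) (hw : ∀ j ∈ s, 0 ≤ w j) :
    ∏ j ∈ s, (1 + w j) ≤ Real.exp (∑ j ∈ s, w j) := by
  rw [Real.exp_sum]
  exact Finset.prod_le_prod (fun j hj => by have := hw j hj; positivity)
    (fun j hj => by linarith [Real.add_one_le_exp (w j)])

private lemma summable_norm_quad (p q : ℂ) :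
    Summable (fun n : ℕ => 1/(((n:ℂ)+p) * ((n:ℂ)+q))) := by
  apply Summable.of_norm_bounded_eventually_nat (g := fun n => 4/((n:ℝ)+1)^2)
  · have : Summable (fun j : ℕ => 4 * ((1:ℝ)/((j:ℝ)+1)^2)) := summable_go.mul_left 4
    apply this.congr; intro j; ring
  · have hp := tendsto_natCast_atTop_atTop (R := ℝ) |>.eventually_ge_atTop (2*‖p‖+1)
    have hq := tendsto_natCast_atTop_atTop (R := ℝ) |>.eventually_ge_atTop (2*‖q‖+1)
    filter_upwards [hp, hq] with n hpn hqn
    have key : ∀ r : ℂ, 2*‖r‖+1 ≤ (n:ℝ) → ((n:ℝ)+1)/2 ≤ ‖(n:ℂ)+r‖ := by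
      intro r hr
      have h1 : (n:ℝ) - ‖r‖ ≤ ‖(n:ℂ)+r‖ := by
        have := norm_sub_norm_le ((n:ℂ)) (-r)
        rw [sub_neg_eq_add, norm_neg, Complex.norm_natCast] at this
        linarith
      linarith
    have h1 := key p hpn
    have h2 := key q hqn
    have hpos : (0:ℝ) < ((n:ℝ)+1)/2 := by positivity
    rw [norm_div, norm_one, norm_mul]
    have hnp : (0:ℝ) < ‖(n:ℂ)+p‖ := hpos.trans_le h1
    have hnq : (0:ℝ) < ‖(n:ℂ)+q‖ := hpos.trans_le h2
    rw [div_le_div_iff₀ (by positivity) (by positivity)]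
    calc (1:ℝ) * ((n:ℝ)+1)^2 = (((n:ℝ)+1)/2) * (((n:ℝ)+1)/2) * 4 := by ring
      _ ≤ ‖(n:ℂ)+p‖ * ‖(n:ℂ)+q‖ * 4 := by
          apply mul_le_mul_of_nonneg_right _ (by norm_num)
          exact mul_le_mul h1 h2 hpos.le hnp.le
      _ = 4 * (‖(n:ℂ)+p‖ * ‖(n:ℂ)+q‖) := by ring

private lemma sin_pi_mul_ne (z : ℂ) (hz : ∀ k : ℤ, z ≠ (k:ℂ)) :
    Complex.sin ((Real.pi:ℂ) * z) ≠ 0 := by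
  intro h
  obtain ⟨k, hk⟩ := Complex.sin_eq_zero_iff.mp h
  have hπ : (Real.pi : ℂ) ≠ 0 := Complex.ofReal_ne_zero.mpr Real.pi_ne_zero
  apply hz k
  have : (Real.pi:ℂ) * z = (Real.pi:ℂ) * (k:ℂ) := by rw [hk]; ring
  exact mul_left_cancel₀ hπ this

private lemma hasSum_pair (z : ℂ) (hz : ∀ k : ℤ, z ≠ (k:ℂ)) :
    HasSum (fun n : ℕ => 1/(z - ((n:ℂ)+1)) + 1/(z + ((n:ℂ)+1)))
      ((Real.pi:ℂ) * Complex.cos ((Real.pi:ℂ)*z) / Complex.sin ((Real.pi:ℂ)*z) - 1/z) := by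
  have hπ : (Real.pi : ℂ) ≠ 0 := Complex.ofReal_ne_zero.mpr Real.pi_ne_zero
  have hz0 : z ≠ 0 := by simpa using hz 0
  have hzm : ∀ n : ℕ, z - ((n:ℂ)+1) ≠ 0 := by
    intro n
    refine sub_ne_zero.mpr ?_
    have := hz ((n:ℤ)+1); push_cast at this; exact this
  have hzp : ∀ n : ℕ, z + ((n:ℂ)+1) ≠ 0 := by
    intro n h
    have := hz (-((n:ℤ)+1))
    apply this; push_cast; linear_combination h
  have hsin : Complex.sin ((Real.pi:ℂ) * z) ≠ 0 := sin_pi_mul_ne z hz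
  -- setup
  set R : ℝ := ‖z‖ + 1 with hR
  have hR0 : 0 < R := by positivity
  set s : Set ℂ := Metric.ball (0:ℂ) R with hs
  have hzs : z ∈ s := by simp [hs, hR]
  set c : ℕ → ℝ := fun j => R^2/((j:ℝ)+1)^2 with hcdef
  have hc : Summable c := by
    have : Summable (fun j : ℕ => R^2 * ((1:ℝ)/((j:ℝ)+1)^2)) := summable_go.mul_left _
    apply this.congr; intro j; simp [hcdef]; ring
  have hcnn : ∀ j, 0 ≤ c j := fun j => by positivity
  set f : ℕ → ℂ → ℂ := fun N w =>
    (Real.pi:ℂ) * w * ∏ j ∈ Finset.range N, (1 - w^2/((j:ℂ)+1)^2) with hfdef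
  set g : ℂ → ℂ := fun w => Complex.sin ((Real.pi:ℂ)*w) with hgdef
  set δ : ℕ → ℝ := fun N => (∑' j, c j) - ∑ j ∈ Finset.range N, c j with hδdef
  set C : ℝ := Real.pi * R * Real.exp (∑' j, c j) with hCdef
  have hC0 : 0 < C := by positivity
  -- norm facts on the ball
  have hvle : ∀ x : ℂ, ‖x‖ ≤ R → ∀ j : ℕ, ‖x^2/((j:ℂ)+1)^2‖ ≤ c j := by
    intro x hx j
    have hj : ((j:ℂ)+1) = (((j+1:ℕ)):ℂ) := by push_cast; ring
    rw [norm_div, norm_pow, norm_pow, hj, Complex.norm_natCast]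
    have : ((j+1:ℕ):ℝ) = (j:ℝ)+1 := by push_cast; ring
    rw [this, hcdef]
    apply div_le_div_of_nonneg_right ?_ (by positivity)
    · exact pow_le_pow_left₀ (norm_nonneg _) hx 2
  have hprodnorm : ∀ x : ℂ, ‖x‖ ≤ R → ∀ t : Finset ℕ,
      ‖∏ j ∈ t, ((1:ℂ) - x^2/((j:ℂ)+1)^2)‖ ≤ Real.exp (∑ j ∈ t, c j) := by
    intro x hx t
    rw [norm_prod]
    calc ∏ j ∈ t, ‖(1:ℂ) - x^2/((j:ℂ)+1)^2‖ ≤ ∏ j ∈ t, (1 + c j) := by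
          apply Finset.prod_le_prod (fun j _ => norm_nonneg _)
          intro j _
          calc ‖(1:ℂ) - x^2/((j:ℂ)+1)^2‖ ≤ ‖(1:ℂ)‖ + ‖x^2/((j:ℂ)+1)^2‖ := norm_sub_le _ _
            _ ≤ 1 + c j := by rw [norm_one]; exact add_le_add le_rfl (hvle x hx j)
      _ ≤ Real.exp (∑ j ∈ t, c j) := prod_one_add_le_exp_sum t c (fun j _ => hcnn j)
  -- key uniform Cauchy estimate
  have hbound : ∀ N n m : ℕ, N ≤ n → n ≤ m → ∀ x ∈ s,
      ‖f m x - f n x‖ ≤ C * (Real.exp (δ N) - 1) := by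
    intro N n m hNn hnm x hx
    have hxR : ‖x‖ ≤ R := by
      have : dist x 0 < R := Metric.mem_ball.mp hx
      rw [dist_zero_right] at this; exact this.le
    have hsplit : f m x - f n x
        = f n x * ((∏ j ∈ Finset.Ico n m, ((1:ℂ) - x^2/((j:ℂ)+1)^2)) - 1) := by
      rw [hfdef]; simp only []
      rw [← Finset.prod_range_mul_prod_Ico _ hnm]; ring
    rw [hsplit, norm_mul]
    have hfn : ‖f n x‖ ≤ C := by
      rw [hfdef]; simp only []
      rw [norm_mul, norm_mul, Complex.norm_real, Real.norm_eq_abs,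
        abs_of_pos Real.pi_pos]
      calc Real.pi * ‖x‖ * ‖∏ j ∈ Finset.range n, ((1:ℂ) - x^2/((j:ℂ)+1)^2)‖
          ≤ Real.pi * R * Real.exp (∑ j ∈ Finset.range n, c j) := by
            apply mul_le_mul (mul_le_mul_of_nonneg_left hxR Real.pi_pos.le)
              (hprodnorm x hxR _) (norm_nonneg _) (by positivity)
        _ ≤ C := by
            rw [hCdef]
            apply mul_le_mul_of_nonneg_left _ (by positivity)
            exact Real.exp_le_exp.mpr (Summable.sum_le_tsum _ (fun j _ => hcnn j) hc)
    have htail : ‖(∏ j ∈ Finset.Ico n m, ((1:ℂ) - x^2/((j:ℂ)+1)^2)) - 1‖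
        ≤ Real.exp (δ N) - 1 := by
      have h1 := _root_.norm_prod_one_add_sub_one_le (Finset.Ico n m) (fun j => -(x^2/((j:ℂ)+1)^2))
      simp only [← sub_eq_add_neg, norm_neg] at h1
      refine h1.trans ?_
      have h2 : (∏ j ∈ Finset.Ico n m, (1 + ‖x^2/((j:ℂ)+1)^2‖))
          ≤ Real.exp (∑ j ∈ Finset.Ico n m, c j) := by
        calc (∏ j ∈ Finset.Ico n m, (1 + ‖x^2/((j:ℂ)+1)^2‖))
            ≤ ∏ j ∈ Finset.Ico n m, (1 + c j) :=
              Finset.prod_le_prod (fun j _ => by positivity)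
                (fun j _ => add_le_add le_rfl (hvle x hxR j))
          _ ≤ _ := prod_one_add_le_exp_sum _ c (fun j _ => hcnn j)
      have h3 : ∑ j ∈ Finset.Ico n m, c j ≤ δ N := by
        rw [Finset.sum_Ico_eq_sub _ hnm, hδdef]
        have h4 : ∑ j ∈ Finset.range m, c j ≤ ∑' j, c j :=
          Summable.sum_le_tsum _ (fun j _ => hcnn j) hc
        have h5 : ∑ j ∈ Finset.range N, c j ≤ ∑ j ∈ Finset.range n, c j :=
          Finset.sum_le_sum_of_subset_of_nonneg (Finset.range_subset_range.mpr hNn)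
            (fun j _ _ => hcnn j)
        simp only []
        linarith
      have := Real.exp_le_exp.mpr h3
      linarith [h2.trans this]
    exact mul_le_mul hfn htail (norm_nonneg _) hC0.le
  -- uniform Cauchy
  have hcauchy : UniformCauchySeqOn f atTop s := by
    rw [Metric.uniformCauchySeqOn_iff]
    intro ε hε
    have hδ0 : Tendsto δ atTop (𝓝 0) := by
      have := hc.hasSum.tendsto_sum_nat
      have h2 := tendsto_const_nhds (x := ∑' j, c j) (f := atTop (α := ℕ)) |>.sub this
      simpa [hδdef] using h2
    have hlim : Tendsto (fun N => C * (Real.exp (δ N) - 1)) atTop (𝓝 0) := by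
      have h1 : Tendsto (fun N => Real.exp (δ N) - 1) atTop (𝓝 0) := by
        have := (Real.continuous_exp.tendsto 0).comp hδ0
        have h2 := this.sub (tendsto_const_nhds (x := (1:ℝ)))
        simpa using h2
      have := h1.const_mul C
      simpa using this
    obtain ⟨N₀, hN₀⟩ := (hlim.eventually (gt_mem_nhds hε)).exists
    refine ⟨N₀, fun m hm n hn x hx => ?_⟩
    rcases le_total n m with h | h
    · rw [dist_eq_norm]
      exact lt_of_le_of_lt (hbound N₀ n m hn h x hx) hN₀
    · rw [dist_comm, dist_eq_norm]
      exact lt_of_le_of_lt (hbound N₀ m n hm h x hx) hN₀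
  -- locally uniform convergence
  have hF : TendstoLocallyUniformlyOn f g atTop s := by
    apply (hcauchy.tendstoUniformlyOn_of_tendsto ?_).tendstoLocallyUniformlyOn
    intro x _
    exact Complex.tendsto_euler_sin_prod x
  have hdiff : ∀ N : ℕ, Differentiable ℂ (f N) := by
    intro N
    apply Differentiable.mul
    · exact (differentiable_const _).mul differentiable_id
    · exact Differentiable.fun_finsetProd (fun j _ =>
        (differentiable_const 1).sub ((differentiable_pow 2).div_const _))
  have htendsto := Complex.logDeriv_tendsto (f := f) (g := g) (Metric.isOpen_ball) hzs hF
    (Eventually.of_forall (fun N => (hdiff N).differentiableOn)) hsin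
  -- compute logDeriv of f N
  have hfac_ne : ∀ j : ℕ, (1:ℂ) - z^2/((j:ℂ)+1)^2 ≠ 0 := by
    intro j h
    have hj : ((j:ℂ)+1) ≠ 0 := by
      have : ((j:ℂ)+1) = (((j+1:ℕ)):ℂ) := by push_cast; ring
      rw [this]; exact_mod_cast Nat.succ_ne_zero j
    have h2 : z^2 = ((j:ℂ)+1)^2 := by
      field_simp at h
      linear_combination -h
    have h3 : (z - ((j:ℂ)+1)) * (z + ((j:ℂ)+1)) = 0 := by linear_combination h2
    rcases mul_eq_zero.mp h3 with h4 | h4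
    · exact hzm j h4
    · exact hzp j h4
  have hlog : ∀ N : ℕ, logDeriv (f N) z
      = 1/z + ∑ j ∈ Finset.range N, (1/(z - ((j:ℂ)+1)) + 1/(z + ((j:ℂ)+1))) := by
    intro N
    have e1 := logDeriv_mul (f := fun w : ℂ => (Real.pi:ℂ) * w)
      (g := fun w : ℂ => ∏ j ∈ Finset.range N, ((1:ℂ) - w^2/((j:ℂ)+1)^2)) z
      (by simp [hπ, hz0]) (Finset.prod_ne_zero_iff.mpr (fun j _ => hfac_ne j))
      (((differentiable_const _).mul differentiable_id).differentiableAt)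
      ((Differentiable.fun_finsetProd (fun j _ =>
        (differentiable_const 1).sub ((differentiable_pow 2).div_const _))).differentiableAt)
    have e2 := logDeriv_prod (s := Finset.range N) (f := fun j (w : ℂ) => (1:ℂ) - w^2/((j:ℂ)+1)^2) (x := z)
      (fun j _ => hfac_ne j) (fun j _ =>
        ((differentiable_const 1).sub ((differentiable_pow 2).div_const _)).differentiableAt)
    have e3 : logDeriv (fun w : ℂ => (Real.pi:ℂ) * w) z = 1/z := by
      rw [logDeriv_const_mul z _ hπ]
      exact logDeriv_id' z
    rw [hfdef]
    show logDeriv (fun w : ℂ => ((Real.pi:ℂ) * w) * ∏ j ∈ Finset.range N, ((1:ℂ) - w^2/((j:ℂ)+1)^2)) z = _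
    rw [e1, e2, e3]
    congr 1
    apply Finset.sum_congr rfl
    intro j _
    show logDeriv (fun w : ℂ => (1:ℂ) - w^2/((j:ℂ)+1)^2) z = _
    have hj : ((j:ℂ)+1) ≠ 0 := by
      have : ((j:ℂ)+1) = (((j+1:ℕ)):ℂ) := by push_cast; ring
      rw [this]; exact_mod_cast Nat.succ_ne_zero j
    have hd : HasDerivAt (fun w : ℂ => (1:ℂ) - w^2/((j:ℂ)+1)^2) (-(2*z/((j:ℂ)+1)^2)) z := by
      have := ((hasDerivAt_pow 2 z).div_const (((j:ℂ)+1)^2)).const_sub (1:ℂ)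
      simpa using this
    rw [logDeriv_apply, hd.deriv]
    rw [div_add_div _ _ (hzm j) (hzp j)]
    rw [div_eq_div_iff (hfac_ne j) (mul_ne_zero (hzm j) (hzp j))]
    field_simp
    ring
  have hlogg : logDeriv g z = (Real.pi:ℂ) * Complex.cos ((Real.pi:ℂ)*z) / Complex.sin ((Real.pi:ℂ)*z) := by
    have hd : HasDerivAt g (Complex.cos ((Real.pi:ℂ)*z) * (Real.pi:ℂ)) z := by
      have h1 : HasDerivAt (fun w : ℂ => (Real.pi:ℂ) * w) ((Real.pi:ℂ)) z := by
        simpa using (hasDerivAt_id z).const_mul (Real.pi:ℂ)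
      have := (Complex.hasDerivAt_sin ((Real.pi:ℂ)*z)).comp z h1
      exact this
    rw [logDeriv_apply, hd.deriv, hgdef]
    ring
  -- summability of the pair series
  have ha_eq : ∀ j : ℕ, 1/(z - ((j:ℂ)+1)) + 1/(z + ((j:ℂ)+1))
      = (-(2*z)) * (1/(((j:ℂ)+(1-z)) * ((j:ℂ)+(1+z)))) := by
    intro j
    have h1 : ((j:ℂ)+(1-z)) ≠ 0 := by
      intro h; apply hzm j; linear_combination -h
    have h2 : ((j:ℂ)+(1+z)) ≠ 0 := by
      intro h; apply hzp j; linear_combination h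
    have e1 : z - ((j:ℂ)+1) = -((j:ℂ)+(1-z)) := by ring
    have e2 : z + ((j:ℂ)+1) = (j:ℂ)+(1+z) := by ring
    rw [e1, e2, div_add_div _ _ (neg_ne_zero.mpr h1) h2, mul_one_div,
      div_eq_div_iff (mul_ne_zero (neg_ne_zero.mpr h1) h2) (mul_ne_zero h1 h2)]
    ring
  have hsummable : Summable (fun j : ℕ => 1/(z - ((j:ℂ)+1)) + 1/(z + ((j:ℂ)+1))) := by
    have := (summable_norm_quad (1-z) (1+z)).mul_left (-(2*z))
    apply this.congr
    intro j
    exact (ha_eq j).symm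
  -- conclude
  rw [hsummable.hasSum_iff_tendsto_nat]
  have h1 : Tendsto (fun N => logDeriv (f N) z - 1/z) atTop
      (𝓝 (logDeriv g z - 1/z)) := htendsto.sub tendsto_const_nhds
  rw [hlogg] at h1
  apply h1.congr
  intro N
  rw [hlog N]
  ring

private lemma trig_key (u z : ℂ) (hz : z ≠ 0) (hs : Complex.sin u ≠ 0)
    (hc : Complex.cos u ≠ 0) :
    2*((1/2) * ((Real.pi:ℂ) * Complex.cos u / Complex.sin u - 1/(z/2)))
      - ((Real.pi:ℂ) * Complex.cos (2*u) / Complex.sin (2*u) - 1/z)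
    = (Real.pi:ℂ)/Complex.sin (2*u) - 1/z := by
  have hs2 : Complex.sin (2*u) ≠ 0 := by
    rw [Complex.sin_two_mul]
    exact mul_ne_zero (mul_ne_zero two_ne_zero hs) hc
  have h2sc : 2*Complex.sin u*Complex.cos u ≠ 0 :=
    mul_ne_zero (mul_ne_zero two_ne_zero hs) hc
  have main : (Real.pi:ℂ)*Complex.cos u/Complex.sin u
      - (Real.pi:ℂ)*(2*Complex.cos u^2-1)/(2*Complex.sin u*Complex.cos u)
      = (Real.pi:ℂ)/(2*Complex.sin u*Complex.cos u) := by
    rw [div_sub_div _ _ hs h2sc, div_eq_div_iff (mul_ne_zero hs h2sc) h2sc]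
    ring
  rw [Complex.sin_two_mul, Complex.cos_two_mul, one_div_div]
  linear_combination main

private lemma hasSum_alt (z : ℂ) (hz : ∀ k : ℤ, z ≠ (k:ℂ)) :
    HasSum (fun n : ℕ => (-1:ℂ)^(n+1) * (1/(z - ((n:ℂ)+1)) + 1/(z + ((n:ℂ)+1))))
      ((Real.pi:ℂ)/Complex.sin ((Real.pi:ℂ)*z) - 1/z) := by
  have hz0 : z ≠ 0 := by simpa using hz 0
  have hz2 : ∀ k : ℤ, z/2 ≠ (k:ℂ) := by
    intro k h
    apply hz (2*k)
    push_cast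
    linear_combination 2*h
  have hz20 : z/2 ≠ 0 := by simpa using hz2 0
  have hA := hasSum_pair z hz
  have hA2 := hasSum_pair (z/2) hz2
  set a : ℕ → ℂ := fun n => 1/(z - ((n:ℂ)+1)) + 1/(z + ((n:ℂ)+1)) with hadef
  set b : ℕ → ℂ := fun n => if Odd n then a n else 0 with hbdef
  set Kz : ℂ := (Real.pi:ℂ) * Complex.cos ((Real.pi:ℂ)*z) / Complex.sin ((Real.pi:ℂ)*z) - 1/z with hKz
  set Kz2 : ℂ := (Real.pi:ℂ) * Complex.cos ((Real.pi:ℂ)*(z/2)) / Complex.sin ((Real.pi:ℂ)*(z/2)) - 1/(z/2) with hKz2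
  -- sum over odd indices
  have hodd : HasSum (fun m : ℕ => a (2*m+1)) ((1/2) * Kz2) := by
    have heq : (fun m : ℕ => a (2*m+1))
        = fun m : ℕ => (1/2) * (1/(z/2 - ((m:ℂ)+1)) + 1/(z/2 + ((m:ℂ)+1))) := by
      funext m
      have hm1 : z/2 - ((m:ℂ)+1) ≠ 0 := by
        refine sub_ne_zero.mpr ?_
        have := hz2 ((m:ℤ)+1); push_cast at this; exact this
      have hm2 : z/2 + ((m:ℂ)+1) ≠ 0 := by
        intro h; apply hz2 (-((m:ℤ)+1)); push_cast; linear_combination h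
      rw [hadef]
      simp only []
      have e1 : z - (((2*m+1:ℕ):ℂ)+1) = 2*(z/2 - ((m:ℂ)+1)) := by push_cast; ring
      have e2 : z + (((2*m+1:ℕ):ℂ)+1) = 2*(z/2 + ((m:ℂ)+1)) := by push_cast; ring
      rw [e1, e2]
      simp only [one_div, mul_inv]
      ring
    rw [heq]
    exact hA2.mul_left _
  have hb : HasSum b ((1/2) * Kz2) := by
    have hinj : Function.Injective (fun m : ℕ => 2*m+1) := by
      intro x y h; simp only [] at h; omega
    have hvan : ∀ x ∉ Set.range (fun m : ℕ => 2*m+1), b x = 0 := by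
      intro x hx
      rw [hbdef]
      simp only []
      rw [if_neg]
      intro hoddx
      obtain ⟨m, hm⟩ := hoddx
      exact hx ⟨m, hm.symm⟩
    apply (Function.Injective.hasSum_iff hinj hvan).mp
    have : (b ∘ fun m : ℕ => 2*m+1) = fun m : ℕ => a (2*m+1) := by
      funext m
      have hom : Odd (2*m+1) := ⟨m, rfl⟩
      show b (2*m+1) = a (2*m+1)
      rw [hbdef]
      simp only [if_pos hom]
    rw [this]
    exact hodd
  have hsum : HasSum (fun n : ℕ => 2 * b n - a n) (2*((1/2) * Kz2) - Kz) := (hb.mul_left 2).sub hA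
  have heq2 : (fun n : ℕ => 2 * b n - a n) = fun n : ℕ => (-1:ℂ)^(n+1) * a n := by
    funext n
    rcases Nat.even_or_odd n with he | ho
    · have h1 : (-1:ℂ)^(n+1) = -1 := Odd.neg_one_pow (Even.add_one he)
      rw [hbdef]
      simp only []
      rw [if_neg (Nat.not_odd_iff_even.mpr he), h1]
      ring
    · have h1 : (-1:ℂ)^(n+1) = 1 := Even.neg_one_pow (Odd.add_one ho)
      rw [hbdef]
      simp only []
      rw [if_pos ho, h1]
      ring
  rw [heq2] at hsum
  have hval : 2*((1/2) * Kz2) - Kz = (Real.pi:ℂ)/Complex.sin ((Real.pi:ℂ)*z) - 1/z := by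
    have hs2 : Complex.sin ((Real.pi:ℂ)*(z/2)) ≠ 0 := sin_pi_mul_ne (z/2) hz2
    have hs : Complex.sin ((Real.pi:ℂ)*z) ≠ 0 := sin_pi_mul_ne z hz
    have hdouble : (Real.pi:ℂ)*z = 2*((Real.pi:ℂ)*(z/2)) := by ring
    have hc2 : Complex.cos ((Real.pi:ℂ)*(z/2)) ≠ 0 := by
      intro h
      rw [hdouble, Complex.sin_two_mul, h] at hs
      simp at hs
    rw [hKz, hKz2, hdouble]
    exact trig_key ((Real.pi:ℂ)*(z/2)) z hz0 hs2 hc2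
  rw [hval] at hsum
  exact hsum

private lemma summable_norm_quad' (p q : ℂ) :
    Summable (fun n : ℕ => ‖1/(((n:ℂ)+p) * ((n:ℂ)+q))‖) := by
  apply Summable.of_norm_bounded_eventually_nat (g := fun n => 4/((n:ℝ)+1)^2)
  · have : Summable (fun j : ℕ => 4 * ((1:ℝ)/((j:ℝ)+1)^2)) := summable_go.mul_left 4
    apply this.congr; intro j; ring
  · have hp := tendsto_natCast_atTop_atTop (R := ℝ) |>.eventually_ge_atTop (2*‖p‖+1)
    have hq := tendsto_natCast_atTop_atTop (R := ℝ) |>.eventually_ge_atTop (2*‖q‖+1)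
    filter_upwards [hp, hq] with n hpn hqn
    rw [norm_norm]
    have key : ∀ r : ℂ, 2*‖r‖+1 ≤ (n:ℝ) → ((n:ℝ)+1)/2 ≤ ‖(n:ℂ)+r‖ := by
      intro r hr
      have h1 : (n:ℝ) - ‖r‖ ≤ ‖(n:ℂ)+r‖ := by
        have := norm_sub_norm_le ((n:ℂ)) (-r)
        rw [sub_neg_eq_add, norm_neg, Complex.norm_natCast] at this
        linarith
      linarith
    have h1 := key p hpn
    have h2 := key q hqn
    have hpos : (0:ℝ) < ((n:ℝ)+1)/2 := by positivity
    have hnp : (0:ℝ) < ‖(n:ℂ)+p‖ := hpos.trans_le h1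
    have hnq : (0:ℝ) < ‖(n:ℂ)+q‖ := hpos.trans_le h2
    rw [norm_div, norm_one, norm_mul]
    rw [div_le_div_iff₀ (by positivity) (by positivity)]
    calc (1:ℝ) * ((n:ℝ)+1)^2 = (((n:ℝ)+1)/2) * (((n:ℝ)+1)/2) * 4 := by ring
      _ ≤ ‖(n:ℂ)+p‖ * ‖(n:ℂ)+q‖ * 4 := by
          apply mul_le_mul_of_nonneg_right _ (by norm_num)
          exact mul_le_mul h1 h2 hpos.le hnp.le
      _ = 4 * (‖(n:ℂ)+p‖ * ‖(n:ℂ)+q‖) := by ring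

/-- Partial fraction identity for the alternating series. -/

theorem alt_partial_fraction (a b : ℂ) (hab : a ≠ b)
    (ha : ∀ k : ℤ, a ≠ (k : ℂ)) (hb : ∀ k : ℤ, b ≠ (k : ℂ)) :
    (∑' n : ℕ, (-1 : ℂ) ^ n / (((n : ℂ) + a) * ((n : ℂ) + b)))
      + (∑' n : ℕ, (-1 : ℂ) ^ (n + 1) / (((n : ℂ) + 1 - a) * ((n : ℂ) + 1 - b)))
    = (Real.pi : ℂ) / (b - a) *
        (1 / Complex.sin ((Real.pi : ℂ) * a) - 1 / Complex.sin ((Real.pi : ℂ) * b)) := by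
  have hba : b - a ≠ 0 := sub_ne_zero.mpr (fun h => hab h.symm)
  set f₁ : ℕ → ℂ := fun n => (-1:ℂ)^n / (((n:ℂ)+a) * ((n:ℂ)+b)) with hf₁
  set f₂ : ℕ → ℂ := fun n => (-1:ℂ)^(n+1) / (((n:ℂ)+1-a) * ((n:ℂ)+1-b)) with hf₂
  have hS1 : Summable f₁ := by
    apply Summable.of_norm
    apply (summable_norm_quad' a b).congr
    intro n
    rw [hf₁]
    simp [norm_div, norm_pow]
  have hS2 : Summable f₂ := by
    apply Summable.of_norm
    apply (summable_norm_quad' (1-a) (1-b)).congr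
    intro n
    rw [hf₂]
    have e : ((n:ℂ)+(1-a))*((n:ℂ)+(1-b)) = ((n:ℂ)+1-a) * ((n:ℂ)+1-b) := by ring
    simp only []
    rw [← e]
    simp [norm_div, norm_pow]
  have hA := hasSum_alt a ha
  have hB := hasSum_alt b hb
  have hAB := hA.sub hB
  set D : ℕ → ℂ := fun N => (-1:ℂ)^N/((N:ℂ)+a) - (-1:ℂ)^N/((N:ℂ)+b) with hDdef
  have hD0 : Tendsto D atTop (𝓝 0) := by
    have key : ∀ r : ℂ, Tendsto (fun N : ℕ => (-1:ℂ)^N/((N:ℂ)+r)) atTop (𝓝 0) := by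
      intro r
      rw [tendsto_zero_iff_norm_tendsto_zero]
      have hgrow : Tendsto (fun N : ℕ => ‖(N:ℂ)+r‖) atTop atTop := by
        apply tendsto_atTop_mono (f := fun N : ℕ => (N:ℝ) - ‖r‖)
        · intro N
          have := norm_sub_norm_le ((N:ℂ)) (-r)
          rw [sub_neg_eq_add, norm_neg, Complex.norm_natCast] at this
          linarith
        · exact tendsto_atTop_add_const_right atTop (-‖r‖) tendsto_natCast_atTop_atTop
      have := hgrow.inv_tendsto_atTop
      apply this.congr
      intro N
      simp [norm_div, norm_pow, one_div]
    have := (key a).sub (key b)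
    simpa [hDdef] using this
  -- pointwise identity
  have hpoint : ∀ n : ℕ, f₁ n + f₂ n
      = (1/(b-a)) * ((((-1:ℂ)^(n+1) * (1/(a - ((n:ℂ)+1)) + 1/(a + ((n:ℂ)+1))))
          - ((-1:ℂ)^(n+1) * (1/(b - ((n:ℂ)+1)) + 1/(b + ((n:ℂ)+1)))))
        + (D n - D (n+1))) := by
    intro n
    have hna : (n:ℂ)+a ≠ 0 := by
      intro h; apply ha (-(n:ℤ)); push_cast; linear_combination h
    have hnb : (n:ℂ)+b ≠ 0 := by
      intro h; apply hb (-(n:ℤ)); push_cast; linear_combination h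
    have hn1a : (n:ℂ)+1-a ≠ 0 := by
      intro h; apply ha ((n:ℤ)+1); push_cast; linear_combination -h
    have hn1b : (n:ℂ)+1-b ≠ 0 := by
      intro h; apply hb ((n:ℤ)+1); push_cast; linear_combination -h
    have ham : a - ((n:ℂ)+1) ≠ 0 := by
      intro h; apply ha ((n:ℤ)+1); push_cast; linear_combination h
    have hbm : b - ((n:ℂ)+1) ≠ 0 := by
      intro h; apply hb ((n:ℤ)+1); push_cast; linear_combination h
    have hap : a + ((n:ℂ)+1) ≠ 0 := by
      intro h; apply ha (-((n:ℤ)+1)); push_cast; linear_combination h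
    have hbp : b + ((n:ℂ)+1) ≠ 0 := by
      intro h; apply hb (-((n:ℤ)+1)); push_cast; linear_combination h
    have hna' : ((n+1:ℕ):ℂ)+a ≠ 0 := by
      push_cast
      intro h; apply hap; linear_combination h
    have hnb' : ((n+1:ℕ):ℂ)+b ≠ 0 := by
      push_cast
      intro h; apply hbp; linear_combination h
    have pf : ∀ (t x y w : ℂ), x ≠ 0 → y ≠ 0 → w ≠ 0 → w = y - x →
        t/(x*y) = (1/w) * (t/x - t/y) := by
      intro t x y w hx hy hw hwe
      subst hwe
      field_simp
    have e₁ : (-1:ℂ)^n / (((n:ℂ)+a)*((n:ℂ)+b))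
        = (1/(b-a)) * ((-1:ℂ)^n/((n:ℂ)+a) - (-1:ℂ)^n/((n:ℂ)+b)) :=
      pf _ _ _ _ hna hnb hba (by ring)
    have hab' : a - b ≠ 0 := sub_ne_zero.mpr hab
    have e₂ : (-1:ℂ)^(n+1) / (((n:ℂ)+1-a)*((n:ℂ)+1-b))
        = (1/(a-b)) * ((-1:ℂ)^(n+1)/((n:ℂ)+1-a) - (-1:ℂ)^(n+1)/((n:ℂ)+1-b)) :=
      pf _ _ _ _ hn1a hn1b hab' (by ring)
    have einv : (1:ℂ)/(a-b) = -(1/(b-a)) := by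
      rw [show a-b = -(b-a) by ring, one_div, inv_neg, one_div]
    have eA : (1:ℂ)/(a - ((n:ℂ)+1)) = -(1/((n:ℂ)+1-a)) := by
      rw [show a - ((n:ℂ)+1) = -((n:ℂ)+1-a) by ring, one_div, inv_neg, one_div]
    have eB : (1:ℂ)/(b - ((n:ℂ)+1)) = -(1/((n:ℂ)+1-b)) := by
      rw [show b - ((n:ℂ)+1) = -((n:ℂ)+1-b) by ring, one_div, inv_neg, one_div]
    rw [hf₁, hf₂, hDdef]
    simp only []
    push_cast
    rw [e₁, e₂, einv, eA, eB, pow_succ]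
    ring
  -- convergence of partial sums
  have hsumfg : Summable (fun n => f₁ n + f₂ n) := hS1.add hS2
  have hKey : HasSum (fun n => f₁ n + f₂ n)
      ((1/(b-a)) * (((Real.pi:ℂ)/Complex.sin ((Real.pi:ℂ)*a) - 1/a)
        - ((Real.pi:ℂ)/Complex.sin ((Real.pi:ℂ)*b) - 1/b) + (1/a - 1/b))) := by
    rw [hsumfg.hasSum_iff_tendsto_nat]
    have hpartial : ∀ N : ℕ, ∑ n ∈ Finset.range N, (f₁ n + f₂ n)
        = (1/(b-a)) * ((∑ n ∈ Finset.range N, (((-1:ℂ)^(n+1) * (1/(a - ((n:ℂ)+1)) + 1/(a + ((n:ℂ)+1))))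
            - ((-1:ℂ)^(n+1) * (1/(b - ((n:ℂ)+1)) + 1/(b + ((n:ℂ)+1))))))
          + (D 0 - D N)) := by
      intro N
      have h1 : ∑ n ∈ Finset.range N, (f₁ n + f₂ n)
          = ∑ n ∈ Finset.range N, ((1/(b-a)) * ((((-1:ℂ)^(n+1) * (1/(a - ((n:ℂ)+1)) + 1/(a + ((n:ℂ)+1))))
            - ((-1:ℂ)^(n+1) * (1/(b - ((n:ℂ)+1)) + 1/(b + ((n:ℂ)+1))))) + (D n - D (n+1)))) :=
        Finset.sum_congr rfl (fun n _ => hpoint n)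
      rw [h1, ← Finset.mul_sum, Finset.sum_add_distrib, Finset.sum_range_sub' D N]
    have hlim : Tendsto (fun N => (1/(b-a)) * ((∑ n ∈ Finset.range N,
        (((-1:ℂ)^(n+1) * (1/(a - ((n:ℂ)+1)) + 1/(a + ((n:ℂ)+1))))
          - ((-1:ℂ)^(n+1) * (1/(b - ((n:ℂ)+1)) + 1/(b + ((n:ℂ)+1))))))
        + (D 0 - D N))) atTop
        (𝓝 ((1/(b-a)) * (((Real.pi:ℂ)/Complex.sin ((Real.pi:ℂ)*a) - 1/a)
          - ((Real.pi:ℂ)/Complex.sin ((Real.pi:ℂ)*b) - 1/b) + (D 0 - 0)))) := by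
      apply Tendsto.const_mul
      exact (hAB.tendsto_sum_nat).add (tendsto_const_nhds.sub hD0)
    have hD0val : (1:ℂ)/a - 1/b = D 0 - 0 := by
      rw [hDdef]; simp
    rw [hD0val]
    exact Tendsto.congr (fun N => (hpartial N).symm) hlim
  have htsum := hKey.tsum_eq
  rw [Summable.tsum_add hS1 hS2] at htsum
  rw [hf₁, hf₂] at htsum
  rw [htsum]
  have hsa : Complex.sin ((Real.pi:ℂ)*a) ≠ 0 := sin_pi_mul_ne a ha
  have hsb : Complex.sin ((Real.pi:ℂ)*b) ≠ 0 := sin_pi_mul_ne b hb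
  ring
end

section
/- Let m be a nonnegative integer and let a be a complex number with 0 < |a| < 1. Then Σ_{n=1}^∞ (−1)^n H_{n−1}^{(2m+1)}/(n²−a²) = Σ_{j=1}^∞ ζ(‾2j, 2m+1)·a^{2j−2}, i.e., the left-hand side is the sum of the convergent power series in a with coefficients ζ(‾2j, 2m+1) at a^{2j−2}. -/
open Complex Finset Real

lemma harm_le_sqrt (n : ℕ) :
    ∑ k ∈ Finset.range n, (1:ℝ)/((k:ℝ)+1) ≤ 2 * Real.sqrt n := by
  induction n with
  | zero => simp
  | succ n ih =>
    rw [Finset.sum_range_succ]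
    set s := Real.sqrt n with hsdef
    set t := Real.sqrt (n+1 : ℕ) with htdef
    have hcast : ((n+1 : ℕ) : ℝ) = (n:ℝ) + 1 := by push_cast; ring
    have hs0 : 0 ≤ s := Real.sqrt_nonneg _
    have hst : s ≤ t := Real.sqrt_le_sqrt (by push_cast; linarith)
    have h1 : t ^ 2 = (n:ℝ) + 1 := by
      rw [htdef, Real.sq_sqrt (by positivity)]; exact hcast
    have h0 : s ^ 2 = (n:ℝ) := Real.sq_sqrt (by positivity)
    have ht1 : 1 ≤ t := by nlinarith [Real.sqrt_nonneg ((n+1:ℕ):ℝ)]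
    have key : (1:ℝ)/((n:ℝ)+1) ≤ 2 * (t - s) := by
      rw [div_le_iff₀ (by positivity)]
      have h2 : t + s ≤ 2 * t^2 := by nlinarith
      have h3 : (t - s) * (t + s) = 1 := by nlinarith
      nlinarith [mul_le_mul_of_nonneg_left h2 (sub_nonneg.2 hst)]
    have := ih
    linarith

lemma gH_norm_le (p n : ℕ) (hp : 1 ≤ p) : ‖gH p n‖ ≤ 2 * Real.sqrt n := by
  refine le_trans (norm_sum_le _ _) (le_trans ?_ (harm_le_sqrt n))
  apply Finset.sum_le_sum
  intro k _
  have hk : (1:ℝ) ≤ (k:ℝ) + 1 := by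
    have : (0:ℝ) ≤ (k:ℝ) := Nat.cast_nonneg k
    linarith
  have h1 : ‖(1 : ℂ) / ((k : ℂ) + 1) ^ p‖ = 1 / ((k:ℝ)+1) ^ p := by
    have : ((k:ℂ)+1) = (((k:ℝ)+1 : ℝ) : ℂ) := by push_cast; ring
    rw [norm_div, norm_pow, this, Complex.norm_real, norm_one,
      Real.norm_of_nonneg (by positivity)]
  rw [h1]
  have h2 : ((k:ℝ)+1) ^ 1 ≤ ((k:ℝ)+1) ^ p := pow_le_pow_right₀ hk hp
  rw [pow_one] at h2
  exact one_div_le_one_div_of_le (by linarith) h2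

set_option maxHeartbeats 1000000 in
/-- Power series expansion with alternating double zeta values as coefficients. -/
theorem alt_double_zeta_generating (m : ℕ) (a : ℂ)
    (ha : 0 < ‖a‖) (ha1 : ‖a‖ < 1) :
    HasSum (fun j : ℕ => altDoubleZeta (j + 1) m * a ^ (2 * j))
      (∑' n : ℕ, (-1 : ℂ) ^ (n + 1) * gH (2 * m + 1) n / (((n : ℂ) + 1) ^ 2 - a ^ 2)) := by
  set f : ℕ × ℕ → ℂ := fun p =>
    (-1 : ℂ) ^ (p.2 + 1) * gH (2 * m + 1) p.2 * (a ^ 2 / ((p.2 : ℂ) + 1) ^ 2) ^ p.1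
      / ((p.2 : ℂ) + 1) ^ 2 with hfdef
  -- basic facts per n
  have hx1 : ∀ n : ℕ, (1:ℝ) ≤ (n:ℝ) + 1 := fun n => by
    have : (0:ℝ) ≤ (n:ℝ) := Nat.cast_nonneg n; linarith
  have hne : ∀ n : ℕ, ((n:ℂ) + 1) ≠ 0 := fun n => Nat.cast_add_one_ne_zero n
  have hnorm : ∀ n : ℕ, ‖((n:ℂ) + 1)‖ = (n:ℝ) + 1 := fun n => by
    have : ((n:ℂ)+1) = (((n:ℝ)+1 : ℝ) : ℂ) := by push_cast; ring
    rw [this, Complex.norm_real, Real.norm_of_nonneg (by positivity)]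
  have hrnorm : ∀ n : ℕ, ‖a ^ 2 / ((n:ℂ) + 1) ^ 2‖ = ‖a‖^2 / ((n:ℝ)+1)^2 := fun n => by
    rw [norm_div, norm_pow, norm_pow, hnorm]
  have hrlt : ∀ n : ℕ, ‖a ^ 2 / ((n:ℂ) + 1) ^ 2‖ < 1 := fun n => by
    rw [hrnorm]
    have h1 := hx1 n
    have h2 : ‖a‖ < 1 := ha1
    have h3 : (0:ℝ) ≤ ‖a‖ := norm_nonneg a
    rw [div_lt_one (by positivity)]
    nlinarith
  have hd : ∀ n : ℕ, ((n:ℂ) + 1) ^ 2 - a ^ 2 ≠ 0 := fun n => by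
    intro h
    have : a ^ 2 = ((n:ℂ)+1)^2 := by linear_combination -h
    have h4 : ‖a^2‖ = ‖((n:ℂ)+1)^2‖ := by rw [this]
    rw [norm_pow, norm_pow, hnorm] at h4
    have h1 := hx1 n
    have h2 : ‖a‖ < 1 := ha1
    have h3 : (0:ℝ) ≤ ‖a‖ := norm_nonneg a
    nlinarith
  -- summability of f
  have hgsum : Summable (fun j : ℕ => (‖a‖^2) ^ j) := by
    apply summable_geometric_of_lt_one (by positivity)
    have h3 : (0:ℝ) ≤ ‖a‖ := norm_nonneg a
    nlinarith [show ‖a‖ < 1 from ha1]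
  have hhsum : Summable (fun n : ℕ => 2 * Real.sqrt ((n:ℝ)+1) / ((n:ℝ)+1)^2) := by
    have heq : ∀ n : ℕ, 2 * Real.sqrt ((n:ℝ)+1) / ((n:ℝ)+1)^2
        = 2 * ((n:ℝ)+1) ^ (-(3/2) : ℝ) := by
      intro n
      have hx : (0:ℝ) < (n:ℝ)+1 := by positivity
      rw [Real.sqrt_eq_rpow, mul_div_assoc, ← Real.rpow_natCast ((n:ℝ)+1) 2,
        ← Real.rpow_sub hx]
      norm_num
    simp only [heq]
    apply Summable.mul_left
    have h := (Real.summable_nat_rpow (p := -(3/2))).2 (by norm_num)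
    have h2 := (summable_nat_add_iff 1).2 h
    refine h2.congr fun n => ?_
    push_cast
    ring_nf
  have hMsum : Summable (fun p : ℕ × ℕ =>
      (‖a‖^2) ^ p.1 * (2 * Real.sqrt ((p.2:ℝ)+1) / ((p.2:ℝ)+1)^2)) :=
    hgsum.mul_of_nonneg hhsum (fun j => by positivity) (fun n => by positivity)
  have hbd : ∀ p : ℕ × ℕ, ‖f p‖ ≤
      (‖a‖^2) ^ p.1 * (2 * Real.sqrt ((p.2:ℝ)+1) / ((p.2:ℝ)+1)^2) := by
    rintro ⟨j, n⟩
    have hxpos : (0:ℝ) < (n:ℝ)+1 := by positivity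
    have e1 : ‖f (j, n)‖ = ‖gH (2*m+1) n‖ * (‖a‖^2 / ((n:ℝ)+1)^2) ^ j / ((n:ℝ)+1)^2 := by
      simp only [hfdef]
      rw [norm_div, norm_mul, norm_pow (_ / _), hrnorm, norm_pow ((n:ℂ)+1),
        hnorm, norm_mul, norm_pow (-1 : ℂ), norm_neg, norm_one, one_pow, one_mul]
    rw [e1]
    have hg1 : ‖gH (2*m+1) n‖ ≤ 2 * Real.sqrt ((n:ℝ)+1) := by
      refine le_trans (gH_norm_le (2*m+1) n (by omega)) ?_
      have := Real.sqrt_le_sqrt (show (n:ℝ) ≤ (n:ℝ)+1 by linarith)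
      linarith
    have hg2 : (‖a‖^2 / ((n:ℝ)+1)^2) ^ j ≤ (‖a‖^2) ^ j := by
      apply pow_le_pow_left₀ (by positivity)
      apply div_le_self (by positivity)
      nlinarith [hx1 n]
    calc ‖gH (2*m+1) n‖ * (‖a‖^2 / ((n:ℝ)+1)^2) ^ j / ((n:ℝ)+1)^2
        ≤ (2 * Real.sqrt ((n:ℝ)+1)) * (‖a‖^2) ^ j / ((n:ℝ)+1)^2 := by
          have h := mul_le_mul hg1 hg2 (by positivity) (by positivity)
          exact div_le_div_of_nonneg_right h (by positivity) |>.trans_eq rfl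
      _ = (‖a‖^2) ^ j * (2 * Real.sqrt ((n:ℝ)+1) / ((n:ℝ)+1)^2) := by ring
  have hfs : Summable f :=
    Summable.of_norm (Summable.of_nonneg_of_le (fun p => norm_nonneg _) hbd hMsum)
  have hT : HasSum f (∑' p, f p) := hfs.hasSum
  -- fibers over j
  have hfib : ∀ j : ℕ, HasSum (fun n => f (j, n)) (altDoubleZeta (j + 1) m * a ^ (2 * j)) := by
    intro j
    have hs : Summable (fun n => f (j, n)) := hfs.prod_factor j
    have heq : altDoubleZeta (j + 1) m * a ^ (2 * j) = ∑' n, f (j, n) := by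
      rw [altDoubleZeta, ← tsum_mul_right]
      congr 1
      funext n
      simp only [hfdef]
      rw [div_pow, ← pow_mul, ← pow_mul]
      have h1 : ((n:ℂ)+1) ≠ 0 := hne n
      have h2 : 2 * (j + 1) = 2 * j + 2 := by ring
      rw [h2, pow_add]
      field_simp
      try ring
      try tauto
    rw [heq]
    exact hs.hasSum
  -- fibers over n
  have hfib2 : ∀ n : ℕ, HasSum (fun j => f (j, n))
      ((-1 : ℂ) ^ (n + 1) * gH (2 * m + 1) n / (((n : ℂ) + 1) ^ 2 - a ^ 2)) := by
    intro n
    have hgeo := hasSum_geometric_of_norm_lt_one (hrlt n)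
    have h2 := hgeo.mul_left ((-1 : ℂ) ^ (n + 1) * gH (2 * m + 1) n / ((n:ℂ)+1)^2)
    have heq : ((-1 : ℂ) ^ (n + 1) * gH (2 * m + 1) n / ((n:ℂ)+1)^2)
        * (1 - a ^ 2 / ((n:ℂ)+1)^2)⁻¹
        = (-1 : ℂ) ^ (n + 1) * gH (2 * m + 1) n / (((n : ℂ) + 1) ^ 2 - a ^ 2) := by
      have h1 : ((n:ℂ)+1) ≠ 0 := hne n
      have h3 := hd n
      field_simp
    rw [heq] at h2
    refine h2.congr_fun fun j => ?_
    simp only [hfdef]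
    ring
  have H1 : HasSum (fun j : ℕ => altDoubleZeta (j + 1) m * a ^ (2 * j)) (∑' p, f p) :=
    hT.prod_fiberwise hfib
  have hswap : HasSum (fun p : ℕ × ℕ => f (p.2, p.1)) (∑' p, f p) := by
    have := ((Equiv.prodComm ℕ ℕ).hasSum_iff).2 hT
    refine this.congr_fun fun p => ?_
    rfl
  have H2 : HasSum (fun n : ℕ =>
      (-1 : ℂ) ^ (n + 1) * gH (2 * m + 1) n / (((n : ℂ) + 1) ^ 2 - a ^ 2)) (∑' p, f p) :=
    hswap.prod_fiberwise hfib2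
  rw [H2.tsum_eq]
  exact H1
end

section
/- Let m be a nonnegative integer and let a be a complex number with 0 < |a| < 1. Then Σ_{n=1}^∞ (−1)^n/(n^{2m+1}(n²−a²)) = −Σ_{j=1}^∞ ζ̄(2m+2j+1)·a^{2j−2}, i.e., the left-hand side is the sum of the convergent power series in a with coefficients −ζ̄(2m+2j+1) at a^{2j−2}. -/
open Complex Finset Real

noncomputable def Fma (m : ℕ) (a : ℂ) (n j : ℕ) : ℂ :=
  (-1:ℂ)^(n+1) * a^(2*j) / ((n:ℂ)+1)^(2*m+2*j+3)

lemma norm_n1 (n : ℕ) : ‖((n:ℂ)+1)‖ = (n:ℝ)+1 := by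
  rw [show ((n:ℂ)+1) = ((n+1:ℕ):ℂ) by push_cast; ring, Complex.norm_natCast]; push_cast; ring

lemma n1_ne (n : ℕ) : ((n:ℂ)+1) ≠ 0 := by
  have : ((n+1:ℕ):ℂ) ≠ 0 := Nat.cast_ne_zero.mpr (Nat.succ_ne_zero n)
  push_cast at this; exact this

lemma summable_inv_sq : Summable (fun n : ℕ => 1 / ((n : ℝ) + 1) ^ 2) := by
  have h := Real.summable_one_div_nat_pow.mpr (le_refl 2)
  have := (summable_nat_add_iff 1).mpr h
  simpa using this

lemma bound_aux (n s : ℕ) (hs : 2 ≤ s) :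
    1 / ((n:ℝ)+1) ^ s ≤ 1 / ((n:ℝ)+1) ^ 2 := by
  have hn1 : (1:ℝ) ≤ (n:ℝ) + 1 := by
    have := Nat.cast_nonneg (α := ℝ) n; linarith
  have hp : (0:ℝ) < ((n:ℝ)+1)^2 := by positivity
  exact one_div_le_one_div_of_le hp (pow_le_pow_right₀ hn1 hs)

lemma norm_Fma (m : ℕ) (a : ℂ) (n j : ℕ) :
    ‖Fma m a n j‖ = ‖a‖^(2*j) / ((n:ℝ)+1)^(2*m+2*j+3) := by
  rw [Fma, norm_div, norm_mul, norm_pow, norm_pow, norm_pow, norm_n1, norm_neg, norm_one,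
    one_pow, one_mul]

lemma summable_alt (s : ℕ) (hs : 2 ≤ s) :
    Summable (fun n : ℕ => (-1 : ℂ) ^ n / ((n : ℂ) + 1) ^ s) := by
  apply Summable.of_norm
  apply summable_inv_sq.of_nonneg_of_le (fun n => norm_nonneg _)
  intro n
  have : ‖(-1 : ℂ) ^ n / ((n : ℂ) + 1) ^ s‖ = 1 / ((n:ℝ)+1) ^ s := by
    rw [norm_div, norm_pow, norm_pow, norm_n1, norm_neg, norm_one, one_pow]
  rw [this]; exact bound_aux n s hs

lemma den_ne (a : ℂ) (ha1 : ‖a‖ < 1) (n : ℕ) : ((n:ℂ)+1)^2 - a^2 ≠ 0 := by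
  intro h
  have h2 : a^2 = ((n:ℂ)+1)^2 := by linear_combination -h
  have h3 : ‖a‖ ^ 2 = ((n:ℝ)+1)^2 := by
    rw [← norm_pow, h2, norm_pow]
    congr 1
    exact norm_n1 n
  have hn : (0:ℝ) ≤ (n:ℝ) := Nat.cast_nonneg n
  nlinarith [norm_nonneg a]

lemma step2 (m : ℕ) (a : ℂ) (ha1 : ‖a‖ < 1) (n : ℕ) :
    HasSum (fun j => Fma m a n j)
      ((-1:ℂ)^(n+1) / (((n:ℂ)+1)^(2*m+1) * (((n:ℂ)+1)^2 - a^2))) := by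
  have hna : ‖a‖ < 1 := ha1
  have hr : ‖a^2 / ((n:ℂ)+1)^2‖ < 1 := by
    rw [norm_div, norm_pow, norm_pow, norm_n1]
    have hn : (0:ℝ) ≤ (n:ℝ) := Nat.cast_nonneg n
    have h1 : (1:ℝ) ≤ ((n:ℝ)+1)^2 := by nlinarith
    have h2 : ‖a‖^2 < 1 := by nlinarith [norm_nonneg a]
    calc ‖a‖^2 / ((n:ℝ)+1)^2 ≤ ‖a‖^2 / 1 := by
          apply div_le_div_of_nonneg_left (by positivity) one_pos h1
      _ = ‖a‖^2 := by ring
      _ < 1 := h2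
  have hgeo := hasSum_geometric_of_norm_lt_one hr
  have h := hgeo.mul_left ((-1:ℂ)^(n+1) / ((n:ℂ)+1)^(2*m+3))
  have hfun : (fun j : ℕ => ((-1:ℂ)^(n+1) / ((n:ℂ)+1)^(2*m+3)) * (a^2 / ((n:ℂ)+1)^2)^j)
      = fun j => Fma m a n j := by
    funext j
    rw [Fma, div_pow, ← pow_mul, ← pow_mul, div_mul_div_comm, ← pow_add]
    congr 2
    omega
  rw [hfun] at h
  have hval : ((-1:ℂ)^(n+1) / ((n:ℂ)+1)^(2*m+3)) * (1 - a^2 / ((n:ℂ)+1)^2)⁻¹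
      = (-1:ℂ)^(n+1) / (((n:ℂ)+1)^(2*m+1) * (((n:ℂ)+1)^2 - a^2)) := by
    have h1 : (1 - a^2/((n:ℂ)+1)^2) = (((n:ℂ)+1)^2 - a^2)/((n:ℂ)+1)^2 := by
      rw [sub_div, div_self (pow_ne_zero 2 (n1_ne n))]
    rw [h1, inv_div, div_mul_div_comm,
      div_eq_div_iff (mul_ne_zero (pow_ne_zero _ (n1_ne n)) (den_ne a ha1 n))
        (mul_ne_zero (pow_ne_zero _ (n1_ne n)) (den_ne a ha1 n))]
    ring
  rwa [hval] at h

set_option maxHeartbeats 1000000 in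
lemma summable_Fma (m : ℕ) (a : ℂ) (ha1 : ‖a‖ < 1) :
    Summable (fun p : ℕ × ℕ => Fma m a p.2 p.1) := by
  have hna : ‖a‖ < 1 := ha1
  apply Summable.of_norm
  have hgeom : Summable (fun j : ℕ => (‖a‖^2)^j) :=
    summable_geometric_of_lt_one (by positivity) (by nlinarith [norm_nonneg a])
  have hb : Summable (fun p : ℕ × ℕ => (‖a‖^2)^p.1 * (1 / ((p.2:ℝ)+1)^2)) :=
    hgeom.mul_of_nonneg summable_inv_sq (fun j => by positivity) (fun n => by positivity)
  apply hb.of_nonneg_of_le (fun p => norm_nonneg _)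
  rintro ⟨j, n⟩
  rw [norm_Fma, pow_mul, div_eq_mul_one_div]
  apply mul_le_mul_of_nonneg_left _ (by positivity)
  exact bound_aux n _ (by omega)

lemma step3 (m : ℕ) (a : ℂ) (j : ℕ) :
    HasSum (fun n => Fma m a n j) (-azval (2*m+2*j+3) * a^(2*j)) := by
  have hs : 2 ≤ 2*m+2*j+3 := by omega
  have hsum := summable_alt (2*m+2*j+3) hs
  have h := (hsum.hasSum.mul_right (a^(2*j))).neg
  have heq : -azval (2*m+2*j+3) * a^(2*j)
      = -((∑' n : ℕ, (-1:ℂ)^n / ((n:ℂ)+1)^(2*m+2*j+3)) * a^(2*j)) := by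
    rw [azval, if_neg (by omega)]; ring
  rw [heq]
  have hfun : (fun n : ℕ => -((-1:ℂ)^n / ((n:ℂ)+1)^(2*m+2*j+3) * a^(2*j)))
      = fun n => Fma m a n j := by
    funext n; rw [Fma, pow_succ]; ring
  rwa [hfun] at h

set_option maxHeartbeats 2000000 in
/-- Power series expansion with alternating zeta values as coefficients. -/
theorem alt_zeta_generating (m : ℕ) (a : ℂ)
    (ha : 0 < ‖a‖) (ha1 : ‖a‖ < 1) :
    HasSum (fun j : ℕ => -azval (2 * m + 2 * j + 3) * a ^ (2 * j))
      (∑' n : ℕ,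
        (-1 : ℂ) ^ (n + 1) / (((n : ℂ) + 1) ^ (2 * m + 1) * (((n : ℂ) + 1) ^ 2 - a ^ 2))) := by
  have hF := summable_Fma m a ha1
  have hkey := HasSum.prod_fiberwise hF.hasSum (fun j => step3 m a j)
  convert hkey using 1
  have hswap : ∑' p : ℕ × ℕ, Fma m a p.2 p.1 = ∑' p : ℕ × ℕ, Fma m a p.1 p.2 :=
    ((Equiv.prodComm ℕ ℕ).tsum_eq _).symm
  have hF' : Summable (fun p : ℕ × ℕ => Fma m a p.1 p.2) :=
    (Equiv.prodComm ℕ ℕ).summable_iff.mpr hF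
  rw [hswap, Summable.tsum_prod' hF' (fun n => (step2 m a ha1 n).summable)]
  exact (tsum_congr fun n => (step2 m a ha1 n).tsum_eq).symm
end

section
/- Let m be a nonnegative integer and let a be a complex number with 0 < |a| < 1. Then ζ(2m+1; a) + ζ(2m+1; −a) − 2ζ(2m+1) = 2 Σ_{j=1}^∞ C(2j+2m, 2j)·ζ(2m+2j+1)·a^{2j}, i.e., the left-hand side is the sum of the convergent power series in a with coefficients 2·C(2j+2m, 2j)·ζ(2m+2j+1) at a^{2j}, where C(·,·) denotes binomial coefficients. -/
open Complex Finset Real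

/- ### Auxiliary lemmas -/

lemma auxNorm (c : ℂ) (n : ℕ) : (n + 1 : ℝ) - ‖c‖ ≤ ‖(n : ℂ) + 1 + c‖ := by
  have h1 : ‖((n : ℂ) + 1)‖ = (n + 1 : ℝ) := by
    rw [show ((n : ℂ) + 1) = ((n + 1 : ℕ) : ℂ) by push_cast; ring, Complex.norm_natCast]
    push_cast; ring
  have := norm_add_le ((n : ℂ) + 1 + c) (-c)
  simp only [add_neg_cancel_right, norm_neg] at this
  linarith [h1 ▸ this]

lemma auxNormLB {c : ℂ} (hc : ‖c‖ < 1) (n : ℕ) :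
    ((n : ℝ) + 1) * (1 - ‖c‖) ≤ ‖(n : ℂ) + 1 + c‖ := by
  have h := auxNorm c n
  have hn : (1 : ℝ) ≤ (n : ℝ) + 1 := by have := Nat.cast_nonneg (α := ℝ) n; linarith
  nlinarith [norm_nonneg c]

lemma auxNe {c : ℂ} (hc : ‖c‖ < 1) (n : ℕ) : (n : ℂ) + 1 + c ≠ 0 := by
  intro h
  have := auxNormLB hc n
  rw [h, norm_zero] at this
  have hn : (1 : ℝ) ≤ (n : ℝ) + 1 := by have := Nat.cast_nonneg (α := ℝ) n; linarith
  nlinarith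

lemma auxRealSum {p : ℕ} (hp : 2 ≤ p) : Summable (fun n : ℕ => 1 / ((n : ℝ) + 1) ^ p) := by
  have h := summable_one_div_nat_pow.mpr hp
  have := (summable_nat_add_iff (f := fun n : ℕ => 1 / (n : ℝ) ^ p) 1).2 h
  refine this.congr fun n => ?_
  push_cast; ring

lemma auxCSum {c : ℂ} (hc : ‖c‖ < 1) {p : ℕ} (hp : 2 ≤ p) :
    Summable (fun n : ℕ => 1 / ((n : ℂ) + 1 + c) ^ p) := by
  refine Summable.of_norm (Summable.of_nonneg_of_le (fun n => norm_nonneg _)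
    (fun n => ?_) (((auxRealSum hp).mul_left ((1 / (1 - ‖c‖)) ^ p))))
  have hb := auxNormLB hc n
  have h1 : (0 : ℝ) < 1 - ‖c‖ := by linarith
  have hn : (0 : ℝ) < (n : ℝ) + 1 := by positivity
  have hpos : (0 : ℝ) < ((n : ℝ) + 1) * (1 - ‖c‖) := by positivity
  rw [norm_div, norm_one, norm_pow]
  calc 1 / ‖(n : ℂ) + 1 + c‖ ^ p ≤ 1 / (((n : ℝ) + 1) * (1 - ‖c‖)) ^ p := by
        gcongr
      _ = (1 / (1 - ‖c‖)) ^ p * (1 / ((n : ℝ) + 1) ^ p) := by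
        rw [mul_pow]; field_simp; ring
        rw [← mul_pow, inv_mul_cancel₀ h1.ne', one_pow]

lemma auxCSum0 {c : ℂ} (hc : ‖c‖ < 1) {p : ℕ} (hp : 2 ≤ p) :
    Summable (fun n : ℕ => 1 / ((n : ℂ) + c) ^ p) := by
  refine (summable_nat_add_iff (f := fun n : ℕ => 1 / ((n : ℂ) + c) ^ p) 1).1 ?_
  refine (auxCSum hc hp).congr fun n => ?_
  push_cast; ring_nf

lemma auxZvalHasSum {p : ℕ} (hp : 2 ≤ p) :
    HasSum (fun n : ℕ => 1 / ((n : ℂ) + 1) ^ p) (zval p) := by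
  have hs : Summable (fun n : ℕ => 1 / ((n : ℂ) + 1) ^ p) := by
    refine (auxCSum (c := 0) (by norm_num) hp).congr fun n => by ring_nf
  have := hs.hasSum
  rwa [zval, if_neg (by omega), if_neg (by omega)]

set_option maxHeartbeats 1000000 in
lemma auxBin (m : ℕ) {b : ℂ} (hb : ‖b‖ < 1) :
    HasSum (fun j : ℕ => 2 * ((2 * j + 2 * m + 2).choose (2 * j + 2) : ℂ) * b ^ (2 * j + 2))
      (1 / (1 - b) ^ (2 * m + 1) + 1 / (1 + b) ^ (2 * m + 1) - 2) := by
  have h1 := hasSum_choose_mul_geometric_of_norm_lt_one (𝕜 := ℂ) (2 * m) hb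
  have h2 := hasSum_choose_mul_geometric_of_norm_lt_one (𝕜 := ℂ) (2 * m)
    (r := -b) (by simpa using hb)
  have h3 := h1.add h2
  simp only [sub_neg_eq_add] at h3
  set F : ℕ → ℂ := fun k => ((k + 2 * m).choose (2 * m) : ℂ) * b ^ k +
      ((k + 2 * m).choose (2 * m) : ℂ) * (-b) ^ k with hF
  have h4 : HasSum (fun j : ℕ => F (2 * j))
      (1 / (1 - b) ^ (2 * m + 1) + 1 / (1 + b) ^ (2 * m + 1)) := by
    refine (Function.Injective.hasSum_iff (g := fun j : ℕ => 2 * j)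
      (fun x y h => by dsimp at h; omega) ?_).2 h3
    intro x hx
    have hodd : Odd x := by
      rcases Nat.even_or_odd x with he | ho
      · obtain ⟨r, hr⟩ := he
        exact absurd (Set.mem_range.2 ⟨r, by omega⟩) hx
      · exact ho
    simp only [hF, hodd.neg_pow]
    ring
  have h5 := (hasSum_nat_add_iff' (f := fun j : ℕ => F (2 * j)) 1).2 h4
  have hF0 : ∑ i ∈ range 1, F (2 * i) = 2 := by
    simp [hF, Nat.choose_self]
    norm_num
  rw [hF0] at h5
  refine h5.congr_fun fun j => ?_
  have hc : ((2 * j + 2 * m + 2).choose (2 * j + 2) : ℕ) =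
      ((2 * (j + 1) + 2 * m).choose (2 * m) : ℕ) := by
    rw [show 2 * (j + 1) + 2 * m = 2 * j + 2 * m + 2 by ring]
    rw [show (2 * j + 2 : ℕ) = (2 * j + 2 * m + 2) - (2 * m) by omega]
    exact Nat.choose_symm (by omega)
  have hev : Even (2 * (j + 1)) := ⟨j + 1, by ring⟩
  simp only [hF, hev.neg_pow, hc]
  push_cast
  rw [show 2 * (j + 1) = 2 * j + 2 by ring]
  ring

set_option maxHeartbeats 1000000 in
lemma auxFib (m : ℕ) {a : ℂ} (ha1 : ‖a‖ < 1) (n : ℕ) :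
    HasSum (fun j : ℕ => 2 * ((2 * j + 2 * m + 2).choose (2 * j + 2) : ℂ) * a ^ (2 * j + 2) *
        (1 / ((n : ℂ) + 1) ^ (2 * m + 2 * j + 3)))
      (1 / ((n : ℂ) + 1 + a) ^ (2 * m + 1) + 1 / ((n : ℂ) + 1 - a) ^ (2 * m + 1) -
        2 * (1 / ((n : ℂ) + 1) ^ (2 * m + 1))) := by
  set w : ℂ := (n : ℂ) + 1 with hw
  have hw0 : w ≠ 0 := by simpa using auxNe (c := 0) (by norm_num) n
  have hwnorm : (1 : ℝ) ≤ ‖w‖ := by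
    have := auxNorm 0 n
    simp only [add_zero, norm_zero, sub_zero] at this
    have hn : (0:ℝ) ≤ (n:ℝ) := Nat.cast_nonneg n
    rw [hw]; linarith
  have hb : ‖a / w‖ < 1 := by
    rw [norm_div]
    calc ‖a‖ / ‖w‖ ≤ ‖a‖ / 1 := by
          apply div_le_div_of_nonneg_left (norm_nonneg a) one_pos hwnorm
      _ < 1 := by simpa using ha1
  have h := (auxBin m hb).mul_right (1 / w ^ (2 * m + 1))
  have hx0 : (1 - a / w) ≠ 0 := by
    intro h0
    have : a / w = 1 := by linear_combination -h0
    rw [this] at hb; simp at hb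
  have hy0 : (1 + a / w) ≠ 0 := by
    intro h0
    have : a / w = -1 := by linear_combination h0
    rw [this] at hb; simp at hb
  have e1 : (1 - a / w) * w = w - a := by field_simp
  have e2 : (1 + a / w) * w = w + a := by field_simp
  have hval : (1 / (1 - a / w) ^ (2 * m + 1) + 1 / (1 + a / w) ^ (2 * m + 1) - 2) *
      (1 / w ^ (2 * m + 1)) =
      1 / (w + a) ^ (2 * m + 1) + 1 / (w - a) ^ (2 * m + 1) - 2 * (1 / w ^ (2 * m + 1)) := by
    rw [sub_mul, add_mul, div_mul_div_comm, div_mul_div_comm, one_mul, ← mul_pow, ← mul_pow,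
      e1, e2]
    ring
  rw [← hval]
  refine h.congr_fun fun j => ?_
  rw [div_pow, show 2 * m + 2 * j + 3 = (2 * j + 2) + (2 * m + 1) by ring, pow_add]
  have hwp : w ^ (2 * j + 2) ≠ 0 := pow_ne_zero _ hw0
  have hwp2 : w ^ (2 * m + 1) ≠ 0 := pow_ne_zero _ hw0
  field_simp
  ring

lemma auxSdiffShift {c : ℂ} (hc : ‖c‖ < 1) :
    Summable (fun n : ℕ => 1 / ((n : ℂ) + 1 + c) - 1 / ((n : ℂ) + 2)) := by
  refine Summable.of_norm (Summable.of_nonneg_of_le (fun n => norm_nonneg _) (fun n => ?_)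
    ((auxRealSum (p := 2) le_rfl).mul_left (2 / (1 - ‖c‖))))
  have hr1 : (0 : ℝ) < 1 - ‖c‖ := by linarith
  have hX : (n : ℂ) + 1 + c ≠ 0 := auxNe hc n
  have hY : (n : ℂ) + 2 ≠ 0 := by
    rw [show ((n : ℂ) + 2) = ((n + 2 : ℕ) : ℂ) by push_cast; ring]
    exact Nat.cast_ne_zero.2 (by omega)
  have key : 1 / ((n : ℂ) + 1 + c) - 1 / ((n : ℂ) + 2) =
      (1 - c) / (((n : ℂ) + 1 + c) * ((n : ℂ) + 2)) := by
    field_simp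
    ring
  rw [key, norm_div, norm_mul]
  have hXn : ((n : ℝ) + 1) * (1 - ‖c‖) ≤ ‖(n : ℂ) + 1 + c‖ := auxNormLB hc n
  have hYn : ((n : ℝ) + 1) ≤ ‖(n : ℂ) + 2‖ := by
    have he : ‖(n : ℂ) + 2‖ = (n : ℝ) + 2 := by
      rw [show ((n : ℂ) + 2) = ((n + 2 : ℕ) : ℂ) by push_cast; ring, Complex.norm_natCast]
      push_cast; ring
    rw [he]; linarith
  have hnum : ‖(1 : ℂ) - c‖ ≤ 2 := by
    calc ‖(1 : ℂ) - c‖ ≤ ‖(1 : ℂ)‖ + ‖c‖ := norm_sub_le _ _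
      _ ≤ 2 := by rw [norm_one]; linarith
  have hXpos : (0 : ℝ) < ((n : ℝ) + 1) * (1 - ‖c‖) := by positivity
  have hYpos : (0 : ℝ) < (n : ℝ) + 1 := by positivity
  calc ‖(1 : ℂ) - c‖ / (‖(n : ℂ) + 1 + c‖ * ‖(n : ℂ) + 2‖)
      ≤ 2 / ((((n : ℝ) + 1) * (1 - ‖c‖)) * ((n : ℝ) + 1)) := by
        gcongr
      _ = 2 / (1 - ‖c‖) * (1 / ((n : ℝ) + 1) ^ 2) := by
        field_simp

lemma auxSdiff {c : ℂ} (hc0 : c ≠ 0) (hc : ‖c‖ < 1) :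
    Summable (fun n : ℕ => 1 / ((n : ℂ) + c) - 1 / ((n : ℂ) + 1)) := by
  refine (summable_nat_add_iff
    (f := fun n : ℕ => 1 / ((n : ℂ) + c) - 1 / ((n : ℂ) + 1)) 1).1 ?_
  refine (auxSdiffShift hc).congr fun n => ?_
  push_cast
  ring_nf

lemma auxTel : HasSum (fun n : ℕ => 1 / ((n : ℂ) + 1) - 1 / ((n : ℂ) + 2)) 1 := by
  have hs : Summable (fun n : ℕ => 1 / ((n : ℂ) + 1) - 1 / ((n : ℂ) + 2)) := by
    refine (auxSdiffShift (c := 0) (by norm_num)).congr fun n => by ring_nf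
  rw [hs.hasSum_iff_tendsto_nat]
  have hps : ∀ N : ℕ, ∑ i ∈ range N, (1 / ((i : ℂ) + 1) - 1 / ((i : ℂ) + 2)) =
      1 - 1 / ((N : ℂ) + 1) := by
    intro N
    calc ∑ i ∈ range N, (1 / ((i : ℂ) + 1) - 1 / ((i : ℂ) + 2))
        = ∑ i ∈ range N, ((fun i : ℕ => 1 / ((i : ℂ) + 1)) i -
            (fun i : ℕ => 1 / ((i : ℂ) + 1)) (i + 1)) := by
          refine Finset.sum_congr rfl fun i _ => ?_
          push_cast
          ring_nf
      _ = (fun i : ℕ => 1 / ((i : ℂ) + 1)) 0 - (fun i : ℕ => 1 / ((i : ℂ) + 1)) N :=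
          Finset.sum_range_sub' _ N
      _ = 1 - 1 / ((N : ℂ) + 1) := by norm_num
  simp only [hps]
  have h0 : Filter.Tendsto (fun N : ℕ => 1 / ((N : ℂ) + 1)) Filter.atTop (nhds 0) := by
    rw [tendsto_zero_iff_norm_tendsto_zero]
    have : ∀ N : ℕ, ‖1 / ((N : ℂ) + 1)‖ = 1 / ((N : ℝ) + 1) := by
      intro N
      rw [norm_div, norm_one,
        show ((N : ℂ) + 1) = ((N + 1 : ℕ) : ℂ) by push_cast; ring, Complex.norm_natCast]
      push_cast; ring
    simp only [this]
    exact tendsto_one_div_add_atTop_nhds_zero_nat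
  simpa using Filter.Tendsto.sub (tendsto_const_nhds (x := (1 : ℂ))) h0

lemma auxHzetaOne {c : ℂ} :
    hzeta 1 c = ∑' n : ℕ, (1 / ((n : ℂ) + c) - 1 / ((n : ℂ) + 1)) := by
  rw [hzeta, if_pos rfl, digammaC]
  rw [show ∑' n : ℕ, (1 / ((n : ℂ) + c) - 1 / ((n : ℂ) + 1)) =
      -∑' n : ℕ, ((1 : ℂ) / ((n : ℂ) + 1) - 1 / ((n : ℂ) + c)) from by
    rw [← tsum_neg]; exact tsum_congr fun n => by ring]
  ring

set_option maxHeartbeats 1000000 in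
lemma auxT (m : ℕ) {a : ℂ} (ha0 : a ≠ 0) (ha1 : ‖a‖ < 1) :
    HasSum (fun n : ℕ => 1 / ((n : ℂ) + 1 + a) ^ (2 * m + 1) +
        1 / ((n : ℂ) + 1 - a) ^ (2 * m + 1) - 2 * (1 / ((n : ℂ) + 1) ^ (2 * m + 1)))
      (hzeta (2 * m + 1) a + hzeta (2 * m + 1) (-a) - 2 * zval (2 * m + 1)) := by
  have ha1' : ‖-a‖ < 1 := by simpa using ha1
  rcases Nat.eq_zero_or_pos m with hm | hm
  · subst hm
    simp only [Nat.mul_zero, Nat.zero_add, pow_one, mul_zero, zero_add]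
    have hDa := (auxSdiff ha0 ha1).hasSum
    have hDb := (auxSdiff (neg_ne_zero.2 ha0) ha1').hasSum
    have hA := (hasSum_nat_add_iff'
      (f := fun n : ℕ => 1 / ((n : ℂ) + a) - 1 / ((n : ℂ) + 1)) 1).2 hDa
    have hB := (hasSum_nat_add_iff'
      (f := fun n : ℕ => 1 / ((n : ℂ) + (-a)) - 1 / ((n : ℂ) + 1)) 1).2 hDb
    have hA' : HasSum (fun n : ℕ => 1 / ((n : ℂ) + 1 + a) - 1 / ((n : ℂ) + 2))
        ((∑' n : ℕ, (1 / ((n : ℂ) + a) - 1 / ((n : ℂ) + 1))) - (1 / a - 1)) := by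
      have he : ∀ n : ℕ, (1 / (((n + 1 : ℕ) : ℂ) + a) - 1 / (((n + 1 : ℕ) : ℂ) + 1)) =
          1 / ((n : ℂ) + 1 + a) - 1 / ((n : ℂ) + 2) := fun n => by push_cast; ring
      have h2 := hA.congr_fun (fun n => (he n).symm)
      convert h2 using 1
      norm_num
      rfl
      simp
    have hB' : HasSum (fun n : ℕ => 1 / ((n : ℂ) + 1 - a) - 1 / ((n : ℂ) + 2))
        ((∑' n : ℕ, (1 / ((n : ℂ) + (-a)) - 1 / ((n : ℂ) + 1))) - (1 / (-a) - 1)) := by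
      have he : ∀ n : ℕ, (1 / (((n + 1 : ℕ) : ℂ) + (-a)) - 1 / (((n + 1 : ℕ) : ℂ) + 1)) =
          1 / ((n : ℂ) + 1 - a) - 1 / ((n : ℂ) + 2) := fun n => by push_cast; ring
      have h2 := hB.congr_fun (fun n => (he n).symm)
      convert h2 using 1
      norm_num
      rfl
      simp
    have htotal := (hA'.add hB').sub (auxTel.mul_left 2)
    have hval : (hzeta 1 a + hzeta 1 (-a) - 2 * zval 1) =
        ((∑' n : ℕ, (1 / ((n : ℂ) + a) - 1 / ((n : ℂ) + 1))) - (1 / a - 1) +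
          ((∑' n : ℕ, (1 / ((n : ℂ) + (-a)) - 1 / ((n : ℂ) + 1))) - (1 / (-a) - 1)) - 2 * 1) := by
      rw [auxHzetaOne (c := a), auxHzetaOne (c := -a), zval, if_neg one_ne_zero, if_pos rfl]
      have : 1 / (-a) = -(1 / a) := by
        field_simp
      rw [this]
      ring
    rw [hval]
    refine htotal.congr_fun fun n => ?_
    ring
  · have hs1 : 2 * m + 1 ≠ 1 := by omega
    have hs2 : 2 ≤ 2 * m + 1 := by omega
    have hZa := (auxCSum0 ha1 hs2).hasSum
    have hZb := (auxCSum0 ha1' hs2).hasSum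
    have hA := (hasSum_nat_add_iff'
      (f := fun n : ℕ => 1 / ((n : ℂ) + a) ^ (2 * m + 1)) 1).2 hZa
    have hB := (hasSum_nat_add_iff'
      (f := fun n : ℕ => 1 / ((n : ℂ) + (-a)) ^ (2 * m + 1)) 1).2 hZb
    have hA' : HasSum (fun n : ℕ => 1 / ((n : ℂ) + 1 + a) ^ (2 * m + 1))
        ((∑' n : ℕ, 1 / ((n : ℂ) + a) ^ (2 * m + 1)) - 1 / a ^ (2 * m + 1)) := by
      have he : ∀ n : ℕ, 1 / (((n + 1 : ℕ) : ℂ) + a) ^ (2 * m + 1) =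
          1 / ((n : ℂ) + 1 + a) ^ (2 * m + 1) := fun n => by push_cast; ring_nf
      have h2 := hA.congr_fun (fun n => (he n).symm)
      convert h2 using 1
      norm_num
      rfl
      simp
    have hB' : HasSum (fun n : ℕ => 1 / ((n : ℂ) + 1 - a) ^ (2 * m + 1))
        ((∑' n : ℕ, 1 / ((n : ℂ) + (-a)) ^ (2 * m + 1)) - 1 / (-a) ^ (2 * m + 1)) := by
      have he : ∀ n : ℕ, 1 / (((n + 1 : ℕ) : ℂ) + (-a)) ^ (2 * m + 1) =
          1 / ((n : ℂ) + 1 - a) ^ (2 * m + 1) := fun n => by push_cast; ring_nf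
      have h2 := hB.congr_fun (fun n => (he n).symm)
      convert h2 using 1
      norm_num
      rfl
      simp
    have htotal := (hA'.add hB').sub ((auxZvalHasSum hs2).mul_left 2)
    have hodd : (-a) ^ (2 * m + 1) = -(a ^ (2 * m + 1)) := Odd.neg_pow ⟨m, by ring⟩ a
    have hval : (hzeta (2 * m + 1) a + hzeta (2 * m + 1) (-a) - 2 * zval (2 * m + 1)) =
        ((∑' n : ℕ, 1 / ((n : ℂ) + a) ^ (2 * m + 1)) - 1 / a ^ (2 * m + 1) +
          ((∑' n : ℕ, 1 / ((n : ℂ) + (-a)) ^ (2 * m + 1)) - 1 / (-a) ^ (2 * m + 1)) -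
          2 * zval (2 * m + 1)) := by
      rw [hzeta, if_neg hs1, hzeta, if_neg hs1, hodd]
      have : 1 / (-(a ^ (2 * m + 1))) = -(1 / a ^ (2 * m + 1)) := by field_simp
      rw [this]
      ring
    rw [hval]
    exact htotal

lemma auxChoose (j m : ℕ) : (2 * j + 2 * m + 2).choose (2 * j + 2) = (2 * j + 2 + 2 * m).choose (2 * m) := by
  rw [show 2 * j + 2 + 2 * m = 2 * j + 2 * m + 2 by ring]
  rw [show (2 * j + 2 : ℕ) = (2 * j + 2 * m + 2) - (2 * m) by omega]
  exact Nat.choose_symm (by omega)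

lemma auxNormN (n : ℕ) : ‖(n : ℂ) + 1‖ = (n : ℝ) + 1 := by
  rw [show ((n : ℂ) + 1) = ((n + 1 : ℕ) : ℂ) by push_cast; ring, Complex.norm_natCast]
  push_cast; ring

set_option maxHeartbeats 1000000 in
lemma auxGSummable (m : ℕ) {a : ℂ} (ha1 : ‖a‖ < 1) :
    Summable (fun p : ℕ × ℕ => 2 * (((2 * p.1 + 2 * m + 2).choose (2 * p.1 + 2)) : ℂ) *
      a ^ (2 * p.1 + 2) * (1 / ((p.2 : ℂ) + 1) ^ (2 * m + 2 * p.1 + 3))) := by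
  apply Summable.of_norm
  have hnorm : ∀ p : ℕ × ℕ, ‖2 * (((2 * p.1 + 2 * m + 2).choose (2 * p.1 + 2)) : ℂ) *
      a ^ (2 * p.1 + 2) * (1 / ((p.2 : ℂ) + 1) ^ (2 * m + 2 * p.1 + 3))‖ =
      2 * (((2 * p.1 + 2 * m + 2).choose (2 * p.1 + 2)) : ℝ) * ‖a‖ ^ (2 * p.1 + 2) *
        (1 / ((p.2 : ℝ) + 1) ^ (2 * m + 2 * p.1 + 3)) := by
    intro p
    rw [norm_mul, norm_mul, norm_div, norm_one, norm_pow, norm_pow, auxNormN, norm_mul]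
    norm_num
  refine Summable.congr ?_ (fun p => (hnorm p).symm)
  set K : ℝ := ∑' n : ℕ, 1 / ((n : ℝ) + 1) ^ 2 with hK
  have hKsum := auxRealSum (p := 2) le_rfl
  refine (summable_prod_of_nonneg ?_).2 ⟨fun j => ?_, ?_⟩
  · intro p
    positivity
  · dsimp only
    exact (auxRealSum (p := 2 * m + 2 * j + 3) (by omega)).mul_left _
  · have hbase := summable_choose_mul_geometric_of_norm_lt_one (R := ℝ) (2 * m)
      (r := ‖a‖) (by simpa using ha1)
    have hcomp := hbase.comp_injective (i := fun j : ℕ => 2 * j + 2) (fun x y h => by dsimp at h; omega)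
    have hmaj : Summable (fun j : ℕ =>
        2 * (((2 * j + 2 * m + 2).choose (2 * j + 2)) : ℝ) * ‖a‖ ^ (2 * j + 2) * K) := by
      refine ((hcomp.mul_left 2).mul_right K).congr fun j => ?_
      simp only [Function.comp]
      rw [auxChoose]
      ring
    refine Summable.of_nonneg_of_le (fun j => tsum_nonneg fun n => by positivity)
      (fun j => ?_) hmaj
    dsimp only
    rw [tsum_mul_left]
    have hle : ∑' n : ℕ, 1 / ((n : ℝ) + 1) ^ (2 * m + 2 * j + 3) ≤ K := by
      refine Summable.tsum_le_tsum (fun n => ?_) (auxRealSum (by omega)) hKsum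
      have h1 : (1 : ℝ) ≤ (n : ℝ) + 1 := by
        have := Nat.cast_nonneg (α := ℝ) n; linarith
      have := pow_le_pow_right₀ h1 (show 2 ≤ 2 * m + 2 * j + 3 by omega)
      have hp2 : (0 : ℝ) < ((n : ℝ) + 1) ^ 2 := by positivity
      exact one_div_le_one_div_of_le hp2 this
    have hc0 : (0 : ℝ) ≤ 2 * (((2 * j + 2 * m + 2).choose (2 * j + 2)) : ℝ) * ‖a‖ ^ (2 * j + 2) := by
      positivity
    exact mul_le_mul_of_nonneg_left hle hc0

set_option maxHeartbeats 1000000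

/-- Power series expansion of the symmetrized Hurwitz zeta function. -/
theorem hurwitz_zeta_sym_expansion (m : ℕ) (a : ℂ)
    (ha : 0 < ‖a‖) (ha1 : ‖a‖ < 1) :
    HasSum
      (fun j : ℕ =>
        2 * (Nat.choose (2 * j + 2 * m + 2) (2 * j + 2) : ℂ) *
          zval (2 * m + 2 * j + 3) * a ^ (2 * j + 2))
      (hzeta (2 * m + 1) a + hzeta (2 * m + 1) (-a) - 2 * zval (2 * m + 1)) := by
  have ha0 : a ≠ 0 := by
    intro h
    rw [h] at ha
    simp at ha
  have ha1' : ‖a‖ < 1 := ha1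
  set g : ℕ × ℕ → ℂ := fun p => 2 * (((2 * p.1 + 2 * m + 2).choose (2 * p.1 + 2)) : ℂ) *
    a ^ (2 * p.1 + 2) * (1 / ((p.2 : ℂ) + 1) ^ (2 * m + 2 * p.1 + 3)) with hgdef
  have hg : Summable g := auxGSummable m ha1'
  have hgs : HasSum g (∑' p, g p) := hg.hasSum
  have hrow : ∀ j : ℕ, HasSum (fun n => g (j, n))
      (2 * (Nat.choose (2 * j + 2 * m + 2) (2 * j + 2) : ℂ) *
        zval (2 * m + 2 * j + 3) * a ^ (2 * j + 2)) := by
    intro j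
    have h := (auxZvalHasSum (p := 2 * m + 2 * j + 3) (by omega)).mul_left
      (2 * (((2 * j + 2 * m + 2).choose (2 * j + 2)) : ℂ) * a ^ (2 * j + 2))
    have hv : 2 * (Nat.choose (2 * j + 2 * m + 2) (2 * j + 2) : ℂ) *
        zval (2 * m + 2 * j + 3) * a ^ (2 * j + 2) =
        2 * (((2 * j + 2 * m + 2).choose (2 * j + 2)) : ℂ) * a ^ (2 * j + 2) *
          zval (2 * m + 2 * j + 3) := by ring
    rw [hv]
    exact h
  have hcol := hgs.prod_fiberwise hrow
  have hswap : HasSum (g ∘ (Equiv.prodComm ℕ ℕ)) (∑' p, g p) :=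
    ((Equiv.prodComm ℕ ℕ).hasSum_iff).2 hgs
  have hN : HasSum (fun n : ℕ => 1 / ((n : ℂ) + 1 + a) ^ (2 * m + 1) +
      1 / ((n : ℂ) + 1 - a) ^ (2 * m + 1) - 2 * (1 / ((n : ℂ) + 1) ^ (2 * m + 1)))
      (∑' p, g p) :=
    hswap.prod_fiberwise fun n => auxFib m ha1' n
  have hEq : (∑' p, g p) =
      hzeta (2 * m + 1) a + hzeta (2 * m + 1) (-a) - 2 * zval (2 * m + 1) :=
    hN.unique (auxT m ha0 ha1')
  rwa [hEq] at hcol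
end
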